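/- Let p be an odd prime, r ≥ 1, 1 ≤ j ≤ r, and l ∈ {0,…,p−1}. With D_l = {u : 0 ≤ u < p^{r+1}, gcd(u,p)=1, H_{r−1}(u)=l}, the map u ↦ u mod p^j from D_l to (Z/p^j)^* is surjective and every element of (Z/p^j)^* has exactly p^{r−j} preimages in D_l. -/

import Mathlib

/-- The Euler quotient `Q_t(u)` modulo `p^t`, zero when `gcd(u,p) > 1` (and `Q_0 = 0`). -/
def eulerQuotient (p t u : ℕ) : ℕ :=
  if Nat.Coprime u p then (u ^ (p ^ t).totient - 1) / p ^ t % p ^ t else 0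

/-- The highest-level quotient `H_{r-1}(u) = (Q_r(u) - Q_{r-1}(u))/p^{r-1} mod p`. -/
def levelQuotient (p r u : ℕ) : ℕ :=
  ((((eulerQuotient p r u : ℤ) - (eulerQuotient p (r - 1) u : ℤ)) / (p : ℤ) ^ (r - 1))
    % (p : ℤ)).toNat

/-- binomial truncation when `x^2 = 0` -/
lemma pow_add_sq_zero {R : Type*} [CommRing R] (u x : R) (h : x * x = 0) (m : ℕ) :
    (u + x) ^ (m + 1) = u ^ (m + 1) + (m + 1) * u ^ m * x := by
  induction m with
  | zero => ring
  | succ m ih =>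
    have : (u + x) ^ (m + 2) = (u + x) ^ (m + 1) * (u + x) := by ring
    rw [this, ih]
    push_cast
    linear_combination (((m : R) + 1) * u ^ m) * h

/-- binomial truncation when `x^3 = 0` -/
lemma pow_one_add_cube_zero {R : Type*} [CommRing R] (x : R) (h : x ^ 3 = 0) (n : ℕ) :
    (1 + x) ^ n = 1 + n * x + (n.choose 2) * x ^ 2 := by
  induction n with
  | zero => simp
  | succ n ih =>
    have hc : ((n + 1).choose 2 : R) = n.choose 2 + n := by
      have : (n + 1).choose 2 = n.choose 2 + n := by
        rw [Nat.choose_succ_succ]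
        simp [Nat.choose_one_right, Nat.add_comm]
      rw [this]; push_cast; ring
    rw [pow_succ, ih, hc]
    push_cast
    linear_combination (n.choose 2 : R) * h

section Euler
variable {p : ℕ}

lemma coprime_pos {u : ℕ} (hp : p.Prime) (hu : Nat.Coprime u p) : 1 ≤ u := by
  rcases Nat.eq_zero_or_pos u with h | h
  · subst h; rw [Nat.coprime_zero_left] at hu; exact absurd hu hp.one_lt.ne'
  · exact h

lemma euler_dvd (hp : p.Prime) {u : ℕ} (hu : Nat.Coprime u p) (t : ℕ) :
    (p:ℤ)^t ∣ (u:ℤ)^((p^t).totient) - 1 := by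
  have h := (Nat.ModEq.pow_totient (hu.pow_right t)).symm
  have h1 : 1 ≤ u ^ (p^t).totient := Nat.one_le_pow _ _ (coprime_pos hp hu)
  have := (Nat.modEq_iff_dvd' h1).mp h
  have := Int.natCast_dvd_natCast.mpr this
  push_cast [Nat.cast_sub h1] at this
  convert this using 2 <;> push_cast <;> ring

lemma eulerQuotient_int (hp : p.Prime) {u : ℕ} (hu : Nat.Coprime u p) (t : ℕ) :
    (eulerQuotient p t u : ℤ) = ((u:ℤ)^((p^t).totient) - 1) / (p:ℤ)^t % (p:ℤ)^t := by
  have h1 : 1 ≤ u ^ (p^t).totient := Nat.one_le_pow _ _ (coprime_pos hp hu)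
  unfold eulerQuotient
  rw [if_pos hu]
  rw [Int.natCast_mod, Int.natCast_div, Nat.cast_sub h1]
  push_cast
  ring

lemma eulerQuotient_zero (u : ℕ) : eulerQuotient p 0 u = 0 := by
  simp [eulerQuotient, Nat.mod_one]

end Euler

section Facts
variable {p : ℕ}

lemma p_pow_zero_zmod (p a b : ℕ) (h : a ≤ b) : ((p:ZMod (p^b)))^a * (p:ZMod (p^b))^(b-a) = 0 := by
  have : ((p:ZMod (p^b)))^a * (p:ZMod (p^b))^(b-a) = (p:ZMod (p^b))^b := by
    rw [← pow_add]; congr 1; omega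
  rw [this]
  have := ZMod.natCast_self (p^b)
  push_cast at this
  exact this

lemma factA (hp : p.Prime) (u t s : ℕ) :
    ((u:ℤ) + t * (p:ℤ)^(s+1))^((p^(s+1)).totient) - 1 ≡
      (u:ℤ)^((p^(s+1)).totient) - 1 +
        ((p:ℤ)-1) * t * (u:ℤ)^((p^(s+1)).totient - 1) * (p:ℤ)^(2*s+1)
      [ZMOD ((p^(2*s+2):ℕ) : ℤ)] := by
  have hm : (p^(s+1)).totient = p^s*(p-1) :=
    by rw [Nat.totient_prime_pow hp (Nat.succ_pos s)]; simp
  have hm1 : 1 ≤ (p^(s+1)).totient := Nat.totient_pos.mpr (pow_pos hp.pos _)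
  obtain ⟨m', hm'⟩ : ∃ m', (p^(s+1)).totient = m' + 1 :=
    ⟨_, (Nat.succ_pred_eq_of_pos hm1).symm⟩
  rw [← ZMod.intCast_eq_intCast_iff]
  push_cast
  set R := ZMod (p^(2*s+2)) with hR
  have hx : ((t:R) * (p:R)^(s+1)) * ((t:R) * (p:R)^(s+1)) = 0 := by
    have h0 : ((p:R))^(2*s+2) * (p:R)^((2*s+2)-(2*s+2)) = 0 := p_pow_zero_zmod p _ _ le_rfl
    simp only [Nat.sub_self, pow_zero, mul_one] at h0
    calc ((t:R) * (p:R)^(s+1)) * ((t:R) * (p:R)^(s+1))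
        = (t:R)^2 * (p:R)^(2*s+2) := by ring
      _ = 0 := by rw [h0, mul_zero]
  rw [hm']
  rw [pow_add_sq_zero _ _ hx m']
  have hsub : (m' + 1) - 1 = m' := rfl
  rw [hsub]
  have hmR : ((m':R) + 1) = (p:R)^s * ((p:R) - 1) := by
    have : ((m' + 1 : ℕ) : R) = ((p^s*(p-1) : ℕ) : R) := by rw [← hm', hm]
    push_cast [Nat.cast_sub hp.one_le] at this
    rw [this, Nat.cast_mul, Nat.cast_pow, Nat.cast_sub hp.one_le, Nat.cast_one]
  push_cast
  rw [hmR]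
  ring
end Facts

section Facts2
variable {p : ℕ}

lemma p_pow_zero (p b a : ℕ) (h : b ≤ a) : ((p:ZMod (p^b)))^a = 0 := by
  have h2 : ((p:ZMod (p^b)))^a = (p:ZMod (p^b))^b * (p:ZMod (p^b))^(a-b) := by
    rw [← pow_add]; congr 1; omega
  have hb : ((p:ZMod (p^b)))^b = 0 := by
    have := ZMod.natCast_self (p^b); push_cast at this; exact this
  rw [h2, hb, zero_mul]

lemma factB (hp : p.Prime) (u t s' : ℕ) :
    ((u:ℤ) + t*(p:ℤ)^(s'+2))^((p^(s'+1)).totient) ≡ (u:ℤ)^((p^(s'+1)).totient)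
      [ZMOD ((p^(2*s'+2) : ℕ):ℤ)] := by
  have hm : (p^(s'+1)).totient = p^s'*(p-1) := by
    rw [Nat.totient_prime_pow hp (Nat.succ_pos s')]; simp
  have hm1 : 1 ≤ (p^(s'+1)).totient := Nat.totient_pos.mpr (pow_pos hp.pos _)
  obtain ⟨m', hm'⟩ : ∃ m', (p^(s'+1)).totient = m' + 1 :=
    ⟨_, (Nat.succ_pred_eq_of_pos hm1).symm⟩
  rw [← ZMod.intCast_eq_intCast_iff]
  push_cast
  set R := ZMod (p^(2*s'+2)) with hR
  have hx : ((t:R) * (p:R)^(s'+2)) * ((t:R) * (p:R)^(s'+2)) = 0 := by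
    have h0 : ((p:R))^(2*s'+4) = 0 := p_pow_zero p _ _ (by omega)
    calc ((t:R) * (p:R)^(s'+2)) * ((t:R) * (p:R)^(s'+2))
        = (t:R)^2 * (p:R)^(2*s'+4) := by ring
      _ = 0 := by rw [h0, mul_zero]
  rw [hm', pow_add_sq_zero _ _ hx m']
  have hmR : ((m':R) + 1) = (p:R)^s' * ((p:R) - 1) := by
    have h2 : ((m' + 1 : ℕ) : R) = ((p^s'*(p-1) : ℕ) : R) := by rw [← hm', hm]
    push_cast [Nat.cast_sub hp.one_le] at h2
    rw [h2, Nat.cast_mul, Nat.cast_pow, Nat.cast_sub hp.one_le, Nat.cast_one]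
  push_cast
  rw [hmR]
  have h0 : ((p:R))^(2*s'+2) = 0 := p_pow_zero p _ _ (by omega)
  linear_combination ((p:R)-1) * (t:R) * (u:R)^m' * h0

lemma factC (hp : p.Prime) (hodd : Odd p) {u : ℕ} (hu : Nat.Coprime u p) (s' : ℕ) :
    (u:ℤ)^((p^(s'+2)).totient) - 1 ≡ (p:ℤ) * ((u:ℤ)^((p^(s'+1)).totient) - 1)
      [ZMOD ((p^(2*s'+3):ℕ) : ℤ)] := by
  have hm : (p^(s'+2)).totient = (p^(s'+1)).totient * p := by
    rw [Nat.totient_prime_pow hp (Nat.succ_pos _), Nat.totient_prime_pow hp (Nat.succ_pos _)]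
    simp [pow_succ]; ring
  obtain ⟨k, hk⟩ := hodd
  have hch : p.choose 2 = p * ((p-1)/2) := by
    rw [Nat.choose_two_right, Nat.mul_div_assoc p ⟨k, by omega⟩]
  obtain ⟨d, hd⟩ := euler_dvd hp hu (s'+1)
  rw [← ZMod.intCast_eq_intCast_iff]
  push_cast
  set R := ZMod (p^(2*s'+3)) with hR
  have hz : (p:R)^(2*s'+3) = 0 := p_pow_zero _ _ _ le_rfl
  set c : R := (u:R)^((p^(s'+1)).totient) - 1 with hc
  have hcd : c = (p:R)^(s'+1) * ((d : ℤ) : R) := by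
    have h2 := congrArg (fun z : ℤ => (z : R)) hd
    push_cast at h2
    rw [hc]; rw [h2, Int.cast_mul, Int.cast_pow, Int.cast_natCast]
  have hc3 : c^3 = 0 := by
    rw [hcd, mul_pow, ← pow_mul]
    rw [p_pow_zero p (2*s'+3) ((s'+1)*3) (by omega), zero_mul]
  have hpow : (u:R)^((p^(s'+2)).totient) = ((u:R)^((p^(s'+1)).totient))^p := by
    rw [hm, pow_mul]
  have h1c : (u:R)^((p^(s'+1)).totient) = 1 + c := by rw [hc]; ring
  rw [hpow, h1c, pow_one_add_cube_zero c hc3 p]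
  have hc2 : ((p.choose 2 : ℕ) : R) * c^2 = 0 := by
    rw [hcd, hch]
    push_cast
    rw [Nat.cast_mul (α := R)]
    linear_combination ((((p-1)/2 : ℕ) : R) * ((d:ℤ):R)^2) * hz
  linear_combination hc2
end Facts2

section LQ
variable {p : ℕ}

lemma levelQuotient_lt (hp : 0 < p) (r u : ℕ) : levelQuotient p r u < p := by
  unfold levelQuotient
  have h0 : (0:ℤ) < p := by exact_mod_cast hp
  have := Int.emod_lt_of_pos (((eulerQuotient p r u : ℤ) - (eulerQuotient p (r - 1) u : ℤ)) / (p : ℤ) ^ (r - 1)) h0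
  omega

lemma Q_cong (hp : p.Prime) {u : ℕ} (hu : Nat.Coprime u p) (t : ℕ) :
    (eulerQuotient p t u : ℤ) ≡ ((u:ℤ)^((p^t).totient) - 1) / (p:ℤ)^t [ZMOD (p:ℤ)^t] := by
  rw [eulerQuotient_int hp hu]
  exact Int.emod_emod_of_dvd _ dvd_rfl

lemma Q_diff_dvd (hp : p.Prime) (hodd : Odd p) {u : ℕ} (hu : Nat.Coprime u p) (s : ℕ) :
    (p:ℤ)^s ∣ (eulerQuotient p (s+1) u : ℤ) - (eulerQuotient p s u : ℤ) := by
  cases s with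
  | zero => simp
  | succ s' =>
    obtain ⟨F, hF⟩ := euler_dvd hp hu (s'+1)
    have hC := factC hp hodd hu s'
    push_cast at hC
    rw [Int.modEq_iff_dvd] at hC
    obtain ⟨K, hK⟩ := hC
    -- (p:ℤ)*((u:ℤ)^tot(s'+1) - 1) - ((u:ℤ)^tot(s'+2) - 1) = p^(2s'+3) * K
    have hEtop : (u:ℤ)^((p^(s'+2)).totient) - 1 = (p:ℤ)^(s'+2) * F - (p:ℤ)^(2*s'+3) * K := by
      rw [hF] at hK; linear_combination -hK
    have hQtop : (eulerQuotient p (s'+2) u : ℤ) ≡ F - (p:ℤ)^(s'+1)*K [ZMOD (p:ℤ)^(s'+2)] := by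
      have := Q_cong hp hu (s'+2)
      rw [hEtop] at this
      have hdiv : ((p:ℤ)^(s'+2) * F - (p:ℤ)^(2*s'+3) * K) / (p:ℤ)^(s'+2) = F - (p:ℤ)^(s'+1)*K := by
        rw [show (p:ℤ)^(s'+2) * F - (p:ℤ)^(2*s'+3) * K = (p:ℤ)^(s'+2) * (F - (p:ℤ)^(s'+1)*K) by ring]
        exact Int.mul_ediv_cancel_left _ (pow_ne_zero _ (by exact_mod_cast hp.pos.ne'))
      rwa [hdiv] at this
    have hQlow : (eulerQuotient p (s'+1) u : ℤ) ≡ F [ZMOD (p:ℤ)^(s'+1)] := by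
      have := Q_cong hp hu (s'+1)
      rw [hF, Int.mul_ediv_cancel_left _ (pow_ne_zero _ (by exact_mod_cast hp.pos.ne' : (p:ℤ) ≠ 0))] at this
      exact this
    have h1 : (eulerQuotient p (s'+2) u : ℤ) ≡ F - (p:ℤ)^(s'+1)*K [ZMOD (p:ℤ)^(s'+1)] :=
      hQtop.of_dvd (pow_dvd_pow _ (by omega))
    have h1' : (eulerQuotient p (s'+2) u : ℤ) ≡ F [ZMOD (p:ℤ)^(s'+1)] :=
      h1.trans (Int.modEq_iff_dvd.mpr ⟨K, by ring⟩)
    have h2 : (eulerQuotient p (s'+2) u : ℤ) - (eulerQuotient p (s'+1) u : ℤ) ≡ 0 [ZMOD (p:ℤ)^(s'+1)] := by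
      simpa using h1'.sub hQlow
    exact Int.modEq_zero_iff_dvd.mp h2
end LQ

section LQ2
variable {p : ℕ}

lemma levelQuotient_spec (hp : p.Prime) (hodd : Odd p) {u : ℕ} (hu : Nat.Coprime u p) (s : ℕ) :
    ((levelQuotient p (s+1) u : ℤ)) * (p:ℤ)^s ≡
      (eulerQuotient p (s+1) u : ℤ) - (eulerQuotient p s u : ℤ) [ZMOD (p:ℤ)^(s+1)] := by
  obtain ⟨e, he⟩ := Q_diff_dvd hp hodd hu s
  have hp0 : (0:ℤ) < (p:ℤ) := by exact_mod_cast hp.pos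
  have hlq : (levelQuotient p (s+1) u : ℤ) = e % p := by
    unfold levelQuotient
    have hsub : (s+1) - 1 = s := rfl
    rw [hsub, he, Int.mul_ediv_cancel_left _ (pow_ne_zero _ hp0.ne')]
    exact Int.toNat_of_nonneg (Int.emod_nonneg _ hp0.ne')
  rw [hlq, he]
  have h1 : e % (p:ℤ) ≡ e [ZMOD (p:ℤ)] := Int.emod_emod_of_dvd _ dvd_rfl
  have := h1.mul_right' (c := (p:ℤ)^s)
  rwa [show (p:ℤ) * (p:ℤ)^s = (p:ℤ)^(s+1) by ring, mul_comm e ((p:ℤ)^s)] at this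

lemma levelQuotient_unique (hp : p.Prime) (hodd : Odd p) {u : ℕ} (hu : Nat.Coprime u p) (s : ℕ)
    (h : ℕ) (hh : h < p)
    (hcong : (h:ℤ) * (p:ℤ)^s ≡
      (eulerQuotient p (s+1) u : ℤ) - (eulerQuotient p s u : ℤ) [ZMOD (p:ℤ)^(s+1)]) :
    h = levelQuotient p (s+1) u := by
  have hspec := levelQuotient_spec hp hodd hu s
  have hp0 : (0:ℤ) < (p:ℤ) := by exact_mod_cast hp.pos
  have h2 : (h:ℤ) * (p:ℤ)^s ≡ (levelQuotient p (s+1) u : ℤ) * (p:ℤ)^s [ZMOD (p:ℤ)^(s+1)] :=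
    hcong.trans hspec.symm
  have h3 : (p:ℤ)^(s+1) ∣ ((levelQuotient p (s+1) u : ℤ) - h) * (p:ℤ)^s := by
    have := Int.ModEq.dvd h2
    convert this using 1; ring
  rw [show ((p:ℤ))^(s+1) = (p:ℤ) * (p:ℤ)^s by ring] at h3
  have h4 : (p:ℤ) ∣ ((levelQuotient p (s+1) u : ℤ) - h) :=
    (mul_dvd_mul_iff_right (pow_ne_zero s hp0.ne')).mp h3
  have h5 : (levelQuotient p (s+1) u : ℤ) - h = 0 := by
    have hlt := levelQuotient_lt hp.pos (s+1) u
    have hb1 : (levelQuotient p (s+1) u : ℤ) < p := by exact_mod_cast hlt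
    have hb2 : (h:ℤ) < p := by exact_mod_cast hh
    have hb3 : (0:ℤ) ≤ (levelQuotient p (s+1) u : ℤ) := Int.natCast_nonneg _
    have hb4 : (0:ℤ) ≤ (h:ℤ) := Int.natCast_nonneg _
    exact Int.eq_zero_of_abs_lt_dvd h4 (by rw [abs_lt]; omega)
  have : (h:ℤ) = (levelQuotient p (s+1) u : ℤ) := by linarith
  exact_mod_cast this
end LQ2

section Incr
variable {p : ℕ}

lemma coprime_shift {u : ℕ} (hu : Nat.Coprime u p) (t s : ℕ) :
    Nat.Coprime (u + t * p^(s+1)) p := by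
  rw [show t * p^(s+1) = (t*p^s)*p by ring]
  exact (Nat.coprime_add_mul_right_left u p (t*p^s)).mpr hu

lemma eulerQuotient_top_incr (hp : p.Prime) {u : ℕ} (hu : Nat.Coprime u p) (t s : ℕ) :
    (eulerQuotient p (s+1) (u + t*p^(s+1)) : ℤ) ≡
      (eulerQuotient p (s+1) u : ℤ) +
        ((p:ℤ)-1) * t * (u:ℤ)^((p^(s+1)).totient - 1) * (p:ℤ)^s [ZMOD (p:ℤ)^(s+1)] := by
  have hu' := coprime_shift hu t s
  have hp0 : ((p:ℤ)) ≠ 0 := by exact_mod_cast hp.pos.ne'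
  obtain ⟨F, hF⟩ := euler_dvd hp hu (s+1)
  obtain ⟨F', hF'⟩ := euler_dvd hp hu' (s+1)
  have hA := factA hp u t s
  push_cast at hA
  rw [Int.modEq_iff_dvd] at hA
  have hcast : ((u + t*p^(s+1) : ℕ) : ℤ) = (u:ℤ) + t*(p:ℤ)^(s+1) := by push_cast; ring
  rw [← hcast, hF, hF'] at hA
  obtain ⟨K, hK⟩ := hA
  -- hK : p^(s+1)*F + C*p^(2s+1) - p^(s+1)*F' = p^(2s+2)*K
  set C : ℤ := ((p:ℤ)-1) * t * (u:ℤ)^((p^(s+1)).totient - 1) with hC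
  have key : F' = F + C * (p:ℤ)^s - (p:ℤ)^(s+1) * K := by
    have h2 : (p:ℤ)^(s+1) * F' = (p:ℤ)^(s+1) * (F + C*(p:ℤ)^s - (p:ℤ)^(s+1)*K) := by
      rw [show ((p:ℤ))^(2*s+2) = (p:ℤ)^(s+1)*(p:ℤ)^(s+1) by ring] at hK
      linear_combination -hK
    exact mul_left_cancel₀ (pow_ne_zero _ hp0) h2
  have hQ' : (eulerQuotient p (s+1) (u + t*p^(s+1)) : ℤ) ≡ F' [ZMOD (p:ℤ)^(s+1)] := by
    have := Q_cong hp hu' (s+1)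
    rw [hF', Int.mul_ediv_cancel_left _ (pow_ne_zero _ hp0)] at this
    exact this
  have hQ : (eulerQuotient p (s+1) u : ℤ) ≡ F [ZMOD (p:ℤ)^(s+1)] := by
    have := Q_cong hp hu (s+1)
    rw [hF, Int.mul_ediv_cancel_left _ (pow_ne_zero _ hp0)] at this
    exact this
  have h3 : F' ≡ F + C * (p:ℤ)^s [ZMOD (p:ℤ)^(s+1)] := by
    rw [key]
    exact Int.modEq_iff_dvd.mpr ⟨K, by ring⟩
  calc (eulerQuotient p (s+1) (u + t*p^(s+1)) : ℤ) ≡ F' [ZMOD (p:ℤ)^(s+1)] := hQ'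
    _ ≡ F + C * (p:ℤ)^s [ZMOD (p:ℤ)^(s+1)] := h3
    _ ≡ (eulerQuotient p (s+1) u : ℤ) + C * (p:ℤ)^s [ZMOD (p:ℤ)^(s+1)] := (hQ.symm).add_right _
    _ = (eulerQuotient p (s+1) u : ℤ) + ((p:ℤ)-1) * t * (u:ℤ)^((p^(s+1)).totient - 1) * (p:ℤ)^s := by
        rw [hC]

lemma eulerQuotient_low_incr (hp : p.Prime) {u : ℕ} (hu : Nat.Coprime u p) (t s : ℕ) :
    eulerQuotient p s (u + t*p^(s+1)) = eulerQuotient p s u := by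
  cases s with
  | zero => rw [eulerQuotient_zero, eulerQuotient_zero]
  | succ s' =>
    have hu' := coprime_shift hu t (s'+1)
    have hp0 : ((p:ℤ)) ≠ 0 := by exact_mod_cast hp.pos.ne'
    obtain ⟨F, hF⟩ := euler_dvd hp hu (s'+1)
    obtain ⟨F', hF'⟩ := euler_dvd hp hu' (s'+1)
    have hB := factB hp u t s'
    push_cast at hB
    rw [Int.modEq_iff_dvd] at hB
    have hcast : ((u + t*p^(s'+2) : ℕ) : ℤ) = (u:ℤ) + t*(p:ℤ)^(s'+2) := by push_cast; ring
    have hB2 : ((p:ℤ))^(2*s'+2) ∣ ((u:ℤ)^((p^(s'+1)).totient) - 1) - (((u + t*p^(s'+2) : ℕ) : ℤ)^((p^(s'+1)).totient) - 1) := by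
      rw [hcast]
      convert hB using 1
      push_cast
      ring
    rw [hF] at hB2
    have hB3 : ((p:ℤ))^(2*s'+2) ∣ ((p:ℤ)^(s'+1)*F) - ((p:ℤ)^(s'+1)*F') := by
      rw [← hF']
      convert hB2 using 2
    obtain ⟨K, hK⟩ := hB3
    have key : F = F' + (p:ℤ)^(s'+1) * K := by
      have h2 : (p:ℤ)^(s'+1) * F = (p:ℤ)^(s'+1) * (F' + (p:ℤ)^(s'+1)*K) := by
        rw [show ((p:ℤ))^(2*s'+2) = (p:ℤ)^(s'+1)*(p:ℤ)^(s'+1) by ring] at hK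
        linear_combination hK
      exact mul_left_cancel₀ (pow_ne_zero _ hp0) h2
    have e1 : (eulerQuotient p (s'+1) (u + t*p^(s'+2)) : ℤ) = F' % (p:ℤ)^(s'+1) := by
      rw [eulerQuotient_int hp hu', hF', Int.mul_ediv_cancel_left _ (pow_ne_zero _ hp0)]
    have e2 : (eulerQuotient p (s'+1) u : ℤ) = F % (p:ℤ)^(s'+1) := by
      rw [eulerQuotient_int hp hu, hF, Int.mul_ediv_cancel_left _ (pow_ne_zero _ hp0)]
    have e3 : F % (p:ℤ)^(s'+1) = F' % (p:ℤ)^(s'+1) := by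
      rw [key]
      simp [Int.add_mul_emod_self_left]
    have : (eulerQuotient p (s'+1) (u + t*p^(s'+2)) : ℤ) = (eulerQuotient p (s'+1) u : ℤ) := by
      rw [e1, e2, e3]
    exact_mod_cast this
end Incr

section ExistsUnique
variable {p : ℕ}

lemma levelQuotient_incr (hp : p.Prime) (hodd : Odd p) {u : ℕ} (hu : Nat.Coprime u p) (t s : ℕ) :
    (levelQuotient p (s+1) (u + t*p^(s+1)) : ℤ) ≡
      (levelQuotient p (s+1) u : ℤ) + ((p:ℤ)-1) * t * (u:ℤ)^((p^(s+1)).totient - 1)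
      [ZMOD (p:ℤ)] := by
  have hu' := coprime_shift hu t s
  have hp0 : ((p:ℤ)) ≠ 0 := by exact_mod_cast hp.pos.ne'
  set C : ℤ := ((p:ℤ)-1) * t * (u:ℤ)^((p^(s+1)).totient - 1) with hC
  have spec' := levelQuotient_spec hp hodd hu' s
  have spec := levelQuotient_spec hp hodd hu s
  have hlow := eulerQuotient_low_incr hp hu t s
  have htop := eulerQuotient_top_incr hp hu t s
  rw [hlow] at spec'
  -- spec' : lq' * p^s ≡ Q'_{s+1} - Q_s
  have h1 : (levelQuotient p (s+1) (u + t*p^(s+1)) : ℤ) * (p:ℤ)^s ≡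
       ((levelQuotient p (s+1) u : ℤ) + C) * (p:ℤ)^s [ZMOD (p:ℤ)^(s+1)] := by
    calc (levelQuotient p (s+1) (u + t*p^(s+1)) : ℤ) * (p:ℤ)^s
        ≡ (eulerQuotient p (s+1) (u + t*p^(s+1)) : ℤ) - (eulerQuotient p s u : ℤ)
          [ZMOD (p:ℤ)^(s+1)] := spec'
      _ ≡ ((eulerQuotient p (s+1) u : ℤ) + C * (p:ℤ)^s) - (eulerQuotient p s u : ℤ)
          [ZMOD (p:ℤ)^(s+1)] := htop.sub_right _
      _ ≡ ((levelQuotient p (s+1) u : ℤ) * (p:ℤ)^s + C * (p:ℤ)^s)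
          [ZMOD (p:ℤ)^(s+1)] := by
            have := (spec.symm).add_right (C * (p:ℤ)^s)
            convert this using 1 <;> ring
      _ = ((levelQuotient p (s+1) u : ℤ) + C) * (p:ℤ)^s := by ring
  have h2 : (p:ℤ) * (p:ℤ)^s ∣
      (((levelQuotient p (s+1) u : ℤ) + C) - (levelQuotient p (s+1) (u + t*p^(s+1)) : ℤ)) * (p:ℤ)^s := by
    have := Int.ModEq.dvd h1
    rw [show ((p:ℤ))^(s+1) = (p:ℤ) * (p:ℤ)^s by ring] at this
    convert this using 1; ring
  have h3 := (mul_dvd_mul_iff_right (pow_ne_zero s hp0)).mp h2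
  exact (Int.modEq_iff_dvd.mpr h3)

lemma exists_unique_t (hp : p.Prime) (hodd : Odd p) {u : ℕ} (hu : Nat.Coprime u p)
    (s l : ℕ) (hl : l < p) :
    ∃! t : ℕ, t < p ∧ levelQuotient p (s+1) (u + t*p^(s+1)) = l := by
  haveI : Fact p.Prime := ⟨hp⟩
  set m := (p^(s+1)).totient with hm
  have hinj : Function.Injective (fun t : Fin p =>
      (⟨levelQuotient p (s+1) (u + t.val*p^(s+1)), levelQuotient_lt hp.pos _ _⟩ : Fin p)) := by
    intro t₁ t₂ h
    simp only [Fin.mk.injEq] at h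
    have h1 := levelQuotient_incr hp hodd hu t₁.val s
    have h2 := levelQuotient_incr hp hodd hu t₂.val s
    have hcongr : ((levelQuotient p (s+1) u : ℤ) + ((p:ℤ)-1) * t₁.val * (u:ℤ)^(m - 1)) ≡
        ((levelQuotient p (s+1) u : ℤ) + ((p:ℤ)-1) * t₂.val * (u:ℤ)^(m - 1)) [ZMOD (p:ℤ)] := by
      rw [hm]
      exact (h1.symm).trans (by rw [h]; exact h2)
    have hz : (((levelQuotient p (s+1) u : ℤ) + ((p:ℤ)-1) * t₁.val * (u:ℤ)^(m - 1) : ℤ) : ZMod p) =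
        (((levelQuotient p (s+1) u : ℤ) + ((p:ℤ)-1) * t₂.val * (u:ℤ)^(m - 1) : ℤ) : ZMod p) := by
      rw [ZMod.intCast_eq_intCast_iff]
      exact hcongr
    push_cast at hz
    have hpz : ((p:ZMod p)) = 0 := ZMod.natCast_self p
    rw [hpz] at hz
    have hu0 : ((u : ZMod p)) ≠ 0 := by
      rw [Ne, ZMod.natCast_eq_zero_iff]
      exact hp.coprime_iff_not_dvd.mp hu.symm
    have hc' : ((0:ZMod p) - 1) * (u:ZMod p)^(m-1) ≠ 0 := by
      apply mul_ne_zero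
      · rw [zero_sub]; exact neg_ne_zero.mpr one_ne_zero
      · exact pow_ne_zero _ hu0
    have h6 : (t₁.val : ZMod p) * (((0:ZMod p)-1) * (u:ZMod p)^(m-1)) =
        (t₂.val : ZMod p) * (((0:ZMod p)-1) * (u:ZMod p)^(m-1)) := by
      linear_combination hz
    have hcan := mul_right_cancel₀ hc' h6
    have : t₁.val = t₂.val := by
      have e1 := ZMod.val_cast_of_lt t₁.isLt
      have e2 := ZMod.val_cast_of_lt t₂.isLt
      rw [← e1, ← e2, hcan]
    exact Fin.ext this
  have hsurj := Finite.injective_iff_surjective.mp hinj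
  obtain ⟨t, ht⟩ := hsurj ⟨l, hl⟩
  have htv : levelQuotient p (s+1) (u + t.val*p^(s+1)) = l := congrArg Fin.val ht
  refine ⟨t.val, ⟨t.isLt, htv⟩, ?_⟩
  rintro y ⟨hy1, hy2⟩
  have heq : (⟨y, hy1⟩ : Fin p) = t := by
    apply hinj
    apply Fin.ext
    show levelQuotient p (s+1) (u + y*p^(s+1)) = levelQuotient p (s+1) (u + t.val*p^(s+1))
    rw [hy2, htv]
  exact congrArg Fin.val heq
end ExistsUnique

lemma count_mod (N d v : ℕ) (hN : 0 < N) (hv : v < N) :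
    ((Finset.range (N*d)).filter (fun a => a % N = v)).card = d := by
  refine Eq.trans (Finset.card_bij (fun a _ => a / N) ?_ ?_ ?_) (Finset.card_range d)
  · intro a ha
    simp only [Finset.mem_filter, Finset.mem_range] at ha ⊢
    exact Nat.div_lt_of_lt_mul ha.1
  · intro a₁ h₁ a₂ h₂ h
    simp only [Finset.mem_filter, Finset.mem_range] at h₁ h₂
    have e₁ := Nat.div_add_mod a₁ N
    have e₂ := Nat.div_add_mod a₂ N
    rw [h₁.2] at e₁
    rw [h₂.2] at e₂
    rw [← e₁, ← e₂, h]
  · intro b hb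
    simp only [Finset.mem_range] at hb
    refine ⟨v + b*N, ?_, ?_⟩
    · simp only [Finset.mem_filter, Finset.mem_range]
      constructor
      · calc v + b*N < N + b*N := by omega
          _ = (b+1)*N := by ring
          _ ≤ d*N := Nat.mul_le_mul_right N hb
          _ = N*d := mul_comm _ _
      · rw [Nat.add_mul_mod_self_right, Nat.mod_eq_of_lt hv]
    · rw [Nat.add_mul_div_right _ _ hN, Nat.div_eq_of_lt hv, zero_add]

/-- Reduction mod `p^j` maps `D_l` onto `(ℤ/p^j)^*`, each element having
exactly `p^{r-j}` preimages in `D_l`. -/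
theorem levelQuotient_fiber_card (p r j l : ℕ) (hp : p.Prime) (hodd : Odd p)
    (hr : 1 ≤ r) (hj1 : 1 ≤ j) (hjr : j ≤ r) (hl : l < p) :
    let D : Finset ℕ := (Finset.range (p ^ (r + 1))).filter
      (fun u => Nat.Coprime u p ∧ levelQuotient p r u = l)
    (∀ x : ZMod (p ^ j), IsUnit x → ∃ u ∈ D, (u : ZMod (p ^ j)) = x) ∧
    (∀ x : ZMod (p ^ j), IsUnit x →
      (D.filter (fun u : ℕ => (u : ZMod (p ^ j)) = x)).card = p ^ (r - j)) := by
  intro D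
  haveI : NeZero (p ^ j) := ⟨(pow_pos hp.pos j).ne'⟩
  obtain ⟨s, rfl⟩ : ∃ s, r = s + 1 := ⟨r - 1, by omega⟩
  set π := p ^ (s + 1) with hπ
  have key : ∀ x : ZMod (p ^ j), IsUnit x →
      (D.filter (fun u : ℕ => (u : ZMod (p ^ j)) = x)).card = p ^ (s + 1 - j) := by
    intro x hx
    set v := x.val with hv
    have hvlt : v < p ^ j := ZMod.val_lt x
    have hxv : ((v : ℕ) : ZMod (p ^ j)) = x := by rw [hv, ZMod.natCast_val, ZMod.cast_id]
    have hvcop : Nat.Coprime v p := by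
      have h1 : IsUnit ((v : ℕ) : ZMod (p ^ j)) := hxv ▸ hx
      have h2 : Nat.Coprime v (p ^ j) := (ZMod.isUnit_iff_coprime v (p ^ j)).mp h1
      exact Nat.Coprime.coprime_dvd_right (dvd_pow_self p (by omega)) h2
    have hmem : ∀ u : ℕ, ((u : ZMod (p ^ j)) = x ↔ u % p ^ j = v) := by
      intro u
      rw [← hxv, ZMod.natCast_eq_natCast_iff]
      unfold Nat.ModEq
      rw [Nat.mod_eq_of_lt hvlt]
    have hdvdπ : p ^ j ∣ π := pow_dvd_pow p (by omega)
    -- step 1 : the fiber in D has the same card as residues mod p^(s+1)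
    have step1 : (D.filter (fun u : ℕ => (u : ZMod (p ^ j)) = x)).card =
        ((Finset.range π).filter (fun a => a % p ^ j = v)).card := by
      apply Finset.card_bij (fun u _ => u % π)
      · intro u hu
        simp only [D, Finset.mem_filter, Finset.mem_range, hmem] at hu ⊢
        exact ⟨Nat.mod_lt _ (pow_pos hp.pos _), by
          rw [Nat.mod_mod_of_dvd u hdvdπ]; exact hu.2⟩
      · intro u₁ hu₁ u₂ hu₂ hEq
        simp only [D, Finset.mem_filter, Finset.mem_range, hmem] at hu₁ hu₂
        set a := u₁ % π with ha
        have ha2 : u₂ % π = a := by rw [← hEq]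
        have hacop : Nat.Coprime a p := by
          apply Nat.coprime_comm.mp
          apply hp.coprime_iff_not_dvd.mpr
          intro hd
          have hda : p ∣ u₁ % π := ha ▸ hd
          have hdu : p ∣ u₁ := (Nat.dvd_mod_iff (dvd_pow_self p (by omega : s+1 ≠ 0))).mp hda
          exact (hp.coprime_iff_not_dvd.mp hu₁.1.2.1.symm) hdu
        have hEU := exists_unique_t hp hodd hacop s l hl
        obtain ⟨t0, _, huniq⟩ := hEU
        have hd₁ : u₁ = a + (u₁ / π) * π := by
          have h := Nat.div_add_mod u₁ π
          rw [Nat.mul_comm] at h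
          omega
        have hd₂ : u₂ = a + (u₂ / π) * π := by
          have h := Nat.div_add_mod u₂ π
          rw [Nat.mul_comm] at h
          omega
        have ht₁ : u₁ / π < p := by
          apply Nat.div_lt_of_lt_mul
          calc u₁ < p ^ (s + 1 + 1) := hu₁.1.1
            _ = π * p := by rw [hπ]; ring
        have ht₂ : u₂ / π < p := by
          apply Nat.div_lt_of_lt_mul
          calc u₂ < p ^ (s + 1 + 1) := hu₂.1.1
            _ = π * p := by rw [hπ]; ring
        have e₁ : u₁ / π = t0 := huniq _ ⟨ht₁, by rw [← hd₁]; exact hu₁.1.2.2⟩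
        have e₂ : u₂ / π = t0 := huniq _ ⟨ht₂, by rw [← hd₂]; exact hu₂.1.2.2⟩
        rw [hd₁, hd₂, e₁, e₂]
      · intro b hb
        simp only [Finset.mem_filter, Finset.mem_range] at hb
        have hbcop : Nat.Coprime b p := by
          apply Nat.coprime_comm.mp
          apply hp.coprime_iff_not_dvd.mpr
          intro hd
          have : p ∣ b % p ^ j := (Nat.dvd_mod_iff (dvd_pow_self p (by omega : j ≠ 0))).mpr hd
          rw [hb.2] at this
          exact (hp.coprime_iff_not_dvd.mp hvcop.symm) this
        obtain ⟨t, ⟨htp, htl⟩, _⟩ := exists_unique_t hp hodd hbcop s l hl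
        refine ⟨b + t * π, ?_, ?_⟩
        · simp only [D, Finset.mem_filter, Finset.mem_range, hmem]
          refine ⟨⟨?_, coprime_shift hbcop t s, htl⟩, ?_⟩
          · calc b + t * π < π + t * π := by omega
              _ = (t + 1) * π := by ring
              _ ≤ p * π := Nat.mul_le_mul_right π (by omega)
              _ = p ^ (s + 1 + 1) := by rw [hπ]; ring
          · obtain ⟨c, hc⟩ := hdvdπ
            rw [show b + t * π = b + p ^ j * (t * c) by rw [hc]; ring,
              Nat.add_mul_mod_self_left]
            exact hb.2
        · rw [Nat.add_mul_mod_self_right, Nat.mod_eq_of_lt hb.1]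
    have step2 : ((Finset.range π).filter (fun a => a % p ^ j = v)).card = p ^ (s + 1 - j) := by
      have hsplit : π = p ^ j * p ^ (s + 1 - j) := by
        rw [hπ, ← pow_add]; congr 1; omega
      rw [hsplit]
      exact count_mod (p ^ j) (p ^ (s + 1 - j)) v (pow_pos hp.pos _) hvlt
    rw [step1, step2]
  refine ⟨?_, key⟩
  intro x hx
  have h1 := key x hx
  have h2 : 0 < (D.filter (fun u : ℕ => (u : ZMod (p ^ j)) = x)).card := by
    rw [h1]; exact pow_pos hp.pos _
  obtain ⟨u, hu⟩ := Finset.card_pos.mp h2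
  rw [Finset.mem_filter] at hu
  exact ⟨u, hu.1, hu.2⟩
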